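/- arXiv:2201.12937 — 2 statements merged into one kernel-verified Lean document; each statement's English description precedes it below -/
import Mathlib

section
/- Let U' = UR and suppose {|ψ_a⟩}_a is an orthonormal eigenbasis of U with eigenvalues e^{iφ_a}, and |λ⟩ a unit eigenvector of U' with eigenvalue e^{iλ}, with e^{iλ} ≠ e^{iφ_a} for all a. Define the M×M matrix Λ by Λ_{m,m'} = Σ_a b_a ⟨d,m|ψ_a⟩⟨ψ_a|d,m'⟩ where 1 + i b_a = 2/(1 - e^{i(λ - φ_a)}) and b_a is real. If the vector u with components u_m = ⟨d,m|λ⟩ is nonzero, then Λ u = 0, and hence det Λ = 0. -/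
open Complex Matrix

theorem Lambda_mulVec_eq_zero_and_det_eq_zero
    {H : Type*} [NormedAddCommGroup H] [InnerProductSpace ℂ H] [FiniteDimensional ℂ H]
    {M ι : Type*} [Fintype M] [DecidableEq M] [Fintype ι]
    (d : M → H) (hd : Orthonormal ℂ d)
    (U : H ≃ₗᵢ[ℂ] H) (U' : H ≃ₗᵢ[ℂ] H) (R : H →ₗ[ℂ] H)
    (hR : ∀ x : H, R x = x - (2 : ℂ) • ∑ m : M, (inner ℂ (d m) x : ℂ) • d m)
    (hU' : ∀ x : H, U' x = U (R x))
    (ψ : OrthonormalBasis ι ℂ H) (φ : ι → ℝ)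
    (hψ : ∀ a : ι, U (ψ a) = Complex.exp (φ a * Complex.I) • ψ a)
    (lam : ℝ) (v : H) (hv : ‖v‖ = 1)
    (hveig : U' v = Complex.exp (lam * Complex.I) • v)
    (hne : ∀ a : ι, Complex.exp (lam * Complex.I) ≠ Complex.exp (φ a * Complex.I))
    (b : ι → ℝ)
    (hb : ∀ a : ι, (1 : ℂ) + Complex.I * b a =
      2 / (1 - Complex.exp ((lam - φ a : ℝ) * Complex.I)))
    (Λ : Matrix M M ℂ)
    (hΛ : ∀ m m' : M, Λ m m' =
      ∑ a : ι, (b a : ℂ) * (inner ℂ (d m) (ψ a) : ℂ) * (inner ℂ (ψ a) (d m') : ℂ))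
    (u : M → ℂ) (hu : ∀ m : M, u m = (inner ℂ (d m) v : ℂ)) (hu0 : u ≠ 0) :
    Λ.mulVec u = 0 ∧ Λ.det = 0 := by
  classical
  set c : ι → ℂ := fun a => (inner ℂ (ψ a) v : ℂ) with hc
  set S : ι → ℂ := fun a => ∑ m : M, u m * (inner ℂ (ψ a) (d m) : ℂ) with hS
  -- inner product of ψ a with U x
  have hUinner : ∀ (a : ι) (x : H),
      (inner ℂ (ψ a) (U x) : ℂ) = Complex.exp (φ a * Complex.I) * inner ℂ (ψ a) x := by
    intro a x
    have h1 : U ((Complex.exp (-(φ a) * Complex.I)) • ψ a) = ψ a := by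
      rw [LinearIsometryEquiv.map_smul, hψ a, smul_smul, ← Complex.exp_add]
      simp
    calc (inner ℂ (ψ a) (U x) : ℂ)
        = inner ℂ (U ((Complex.exp (-(φ a) * Complex.I)) • ψ a)) (U x) := by rw [h1]
      _ = inner ℂ ((Complex.exp (-(φ a) * Complex.I)) • ψ a) x := U.inner_map_map _ _
      _ = Complex.exp (φ a * Complex.I) * inner ℂ (ψ a) x := by
          rw [inner_smul_left]
          congr 1
          rw [← Complex.exp_conj]
          congr 1
          simp
  -- the inner product with R v
  have hRv : ∀ a : ι, (inner ℂ (ψ a) (R v) : ℂ) = c a - 2 * S a := by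
    intro a
    rw [hR, inner_sub_right, inner_smul_right, inner_sum]
    simp only [inner_smul_right, hS, hc, ← hu]
  -- key relation
  have key : ∀ a : ι, c a = (1 + Complex.I * b a) * S a := by
    intro a
    have heig : Complex.exp (lam * Complex.I) * c a
        = Complex.exp (φ a * Complex.I) * (c a - 2 * S a) := by
      have := congrArg (fun x : H => (inner ℂ (ψ a) x : ℂ)) (hveig)
      simp only [hU' v] at this
      rw [hUinner a (R v), hRv a, inner_smul_right] at this
      exact this.symm
    set E := Complex.exp (lam * Complex.I) with hE
    set F := Complex.exp (φ a * Complex.I) with hF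
    have hFne : F ≠ 0 := Complex.exp_ne_zero _
    have hEF : E ≠ F := hne a
    have hexp : Complex.exp ((lam - φ a : ℝ) * Complex.I) = E / F := by
      rw [hE, hF, ← Complex.exp_sub]
      congr 1
      push_cast
      ring
    have hden : (1 : ℂ) - Complex.exp ((lam - φ a : ℝ) * Complex.I) ≠ 0 := by
      rw [hexp]
      intro h
      apply hEF
      field_simp at h
      linear_combination -h
    have hb' : (1 + Complex.I * b a) * (F - E) = 2 * F := by
      have h := hb a
      rw [hexp] at h
      have hFE : F - E ≠ 0 := sub_ne_zero.mpr (Ne.symm hEF)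
      rw [hexp] at hden
      field_simp at h
      exact h
    have hFE : F - E ≠ 0 := sub_ne_zero.mpr (Ne.symm hEF)
    have h2 : (F - E) * c a = 2 * F * S a := by linear_combination -heig
    apply mul_left_cancel₀ hFE
    calc (F - E) * c a = 2 * F * S a := h2
      _ = (F - E) * ((1 + Complex.I * b a) * S a) := by linear_combination S a * hb'.symm
  -- completeness sums
  have expand : ∀ m : M, u m = ∑ a : ι, (inner ℂ (d m) (ψ a) : ℂ) * c a := by
    intro m
    rw [hu m, hc]
    exact (ψ.sum_inner_mul_inner _ _).symm
  have Ssum : ∀ m : M, ∑ a : ι, (inner ℂ (d m) (ψ a) : ℂ) * S a = u m := by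
    intro m
    calc ∑ a : ι, (inner ℂ (d m) (ψ a) : ℂ) * S a
        = ∑ a : ι, ∑ m' : M, u m' * ((inner ℂ (d m) (ψ a) : ℂ) * (inner ℂ (ψ a) (d m') : ℂ)) := by
          refine Finset.sum_congr rfl fun a _ => ?_
          simp only [hS, Finset.mul_sum]
          exact Finset.sum_congr rfl fun m' _ => by ring
      _ = ∑ m' : M, u m' * ∑ a : ι, (inner ℂ (d m) (ψ a) : ℂ) * (inner ℂ (ψ a) (d m') : ℂ) := by
          rw [Finset.sum_comm]
          exact Finset.sum_congr rfl fun m' _ => (Finset.mul_sum _ _ _).symm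
      _ = ∑ m' : M, u m' * (inner ℂ (d m) (d m') : ℂ) := by
          refine Finset.sum_congr rfl fun m' _ => ?_
          rw [ψ.sum_inner_mul_inner]
      _ = u m := by
          rw [orthonormal_iff_ite] at hd
          simp [hd]
  have hmul : Λ.mulVec u = 0 := by
    funext m
    have h1 : Λ.mulVec u m = ∑ a : ι, (b a : ℂ) * ((inner ℂ (d m) (ψ a) : ℂ) * S a) := by
      simp only [Matrix.mulVec, dotProduct, hΛ, Finset.sum_mul]
      rw [Finset.sum_comm]
      refine Finset.sum_congr rfl fun a _ => ?_
      simp only [hS, Finset.mul_sum]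
      exact Finset.sum_congr rfl fun m' _ => by ring
    have hx : u m = (∑ a : ι, (inner ℂ (d m) (ψ a) : ℂ) * S a)
        + Complex.I * ∑ a : ι, (b a : ℂ) * ((inner ℂ (d m) (ψ a) : ℂ) * S a) := by
      rw [expand m, Finset.mul_sum, ← Finset.sum_add_distrib]
      refine Finset.sum_congr rfl fun a _ => ?_
      rw [key a]; ring
    rw [Ssum m] at hx
    have h0 : Complex.I * ∑ a : ι, (b a : ℂ) * ((inner ℂ (d m) (ψ a) : ℂ) * S a) = 0 := by
      linear_combination -hx
    have := mul_left_cancel₀ Complex.I_ne_zero (h0.trans (mul_zero Complex.I).symm)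
    rw [h1, this]
    rfl
  refine ⟨hmul, ?_⟩
  rw [← Matrix.exists_mulVec_eq_zero_iff]
  exact ⟨u, hu0, hmul⟩
end

section
/- Let n ≥ 2 be an even integer, θ_k = 2πk/n, and for integers x,y define M(x,y) = Σ_{(k,l): cos θ_k cos θ_l ≠ 1} cos(2π(kx+ly)/n)/(1 - cos θ_k cos θ_l) and let C = M(0,0). Then for x = y = 1, C - M(1,1) = n² - 2, i.e., Σ_{(k,l)} (1 - cos(θ_k + θ_l))/(1 - cos θ_k cos θ_l) = n² - 2. -/
open Real Finset

lemma cos_eq_one_iff' (n k : ℕ) (hn : 0 < n) (hk : k < n) :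
    Real.cos (2 * π * k / n) = 1 ↔ k = 0 := by
  constructor
  · intro h
    rw [Real.cos_eq_one_iff] at h
    obtain ⟨m, hm⟩ := h
    have hn' : (n : ℝ) ≠ 0 := Nat.cast_ne_zero.mpr hn.ne'
    have h2π : (2 * π) ≠ 0 := by positivity
    field_simp at hm
    have hmm : (2 * π) * ((m : ℝ) * n) = (2 * π) * k := by linear_combination (2 * π) * hm
    have : (m : ℝ) * n = k := mul_left_cancel₀ h2π hmm
    have hz : m * (n : ℤ) = (k : ℤ) := by exact_mod_cast this
    have hkz : (k : ℤ) < n := by exact_mod_cast hk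
    have hk0 : (0 : ℤ) ≤ k := Int.ofNat_nonneg k
    have hn0 : (0 : ℤ) < n := by exact_mod_cast hn
    have h1 : 0 ≤ m := by nlinarith
    have h2 : m ≤ 0 := by nlinarith
    have hm0 : m = 0 := le_antisymm h2 h1
    subst hm0
    simp at hz
    exact_mod_cast hz.symm
  · intro h; subst h; simp

lemma cos_eq_neg_one_iff' (n k : ℕ) (hn : 0 < n) (hk : k < n) :
    Real.cos (2 * π * k / n) = -1 ↔ 2 * k = n := by
  have hn' : (n : ℝ) ≠ 0 := Nat.cast_ne_zero.mpr hn.ne'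
  have hπ : π ≠ 0 := Real.pi_ne_zero
  constructor
  · intro h
    have h2 : Real.cos (2 * π * k / n - π) = 1 := by
      have he : Real.cos (2 * π * k / n - π) = Real.cos (π - 2 * π * k / n) := by
        rw [← Real.cos_neg]; ring_nf
      rw [he, Real.cos_pi_sub, h]; ring
    rw [Real.cos_eq_one_iff] at h2
    obtain ⟨m, hm⟩ := h2
    field_simp at hm
    have hmm : π * (((2 * m + 1 : ℤ) : ℝ) * n) = π * (2 * k) := by
      push_cast
      linear_combination π * hm
    have : ((2 * m + 1 : ℤ) : ℝ) * n = 2 * k := mul_left_cancel₀ hπ hmm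
    have hz : (2 * m + 1) * (n : ℤ) = 2 * (k : ℤ) := by exact_mod_cast this
    have hkz : (k : ℤ) < n := by exact_mod_cast hk
    have hk0 : (0 : ℤ) ≤ k := Int.ofNat_nonneg k
    have hn0 : (0 : ℤ) < n := by exact_mod_cast hn
    have h1 : 0 ≤ m := by nlinarith
    have h2 : m ≤ 0 := by nlinarith
    have hm0 : m = 0 := le_antisymm h2 h1
    subst hm0
    have : (n : ℤ) = 2 * k := by linarith
    omega
  · intro h
    have hk1 : 0 < k := by omega
    have h2 : (n : ℝ) = 2 * k := by exact_mod_cast h.symm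
    have hkR : (k : ℝ) ≠ 0 := Nat.cast_ne_zero.mpr hk1.ne'
    have : 2 * π * k / n = π := by
      rw [h2]; field_simp
    rw [this, Real.cos_pi]

lemma prod_cos_eq_one_iff (n k l : ℕ) (hn : 0 < n) (hk : k < n) (hl : l < n) :
    Real.cos (2 * π * k / n) * Real.cos (2 * π * l / n) = 1 ↔
      (k = 0 ∧ l = 0) ∨ (2 * k = n ∧ 2 * l = n) := by
  constructor
  · intro h
    set c := Real.cos (2 * π * k / n) with hc
    set d := Real.cos (2 * π * l / n) with hd
    have hc1 : |c| ≤ 1 := Real.abs_cos_le_one _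
    have hd1 : |d| ≤ 1 := Real.abs_cos_le_one _
    rw [abs_le] at hc1 hd1
    have hcd : c ^ 2 * d ^ 2 = 1 := by nlinarith [h]
    have hd2 : d ^ 2 ≤ 1 := by nlinarith [hd1.1, hd1.2]
    have hc3 : c ^ 2 ≤ 1 := by nlinarith [hc1.1, hc1.2]
    have hc4 : 1 ≤ c ^ 2 := by nlinarith [sq_nonneg c, hd2, hcd]
    have hc2 : c ^ 2 = 1 := le_antisymm hc3 hc4
    have hcc : (c - 1) * (c + 1) = 0 := by linear_combination hc2
    rcases mul_eq_zero.mp hcc with h1 | h1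
    · have hcv : c = 1 := by linarith
      have hdv : d = 1 := by linear_combination h - d * hcv
      left
      exact ⟨(cos_eq_one_iff' n k hn hk).mp hcv, (cos_eq_one_iff' n l hn hl).mp hdv⟩
    · have hcv : c = -1 := by linarith
      have hdv : d = -1 := by linear_combination d * hcv - h
      right
      exact ⟨(cos_eq_neg_one_iff' n k hn hk).mp hcv, (cos_eq_neg_one_iff' n l hn hl).mp hdv⟩
  · rintro (⟨h1, h2⟩ | ⟨h1, h2⟩)
    · subst h1; subst h2; simp
    · rw [(cos_eq_neg_one_iff' n k hn hk).mpr h1, (cos_eq_neg_one_iff' n l hn hl).mpr h2]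
      ring

theorem C_sub_M_one_one (n : ℕ) (hn : 2 ≤ n) (he : Even n) :
    (∑ p ∈ ((Finset.range n ×ˢ Finset.range n).filter
        (fun p => Real.cos (2 * π * p.1 / n) * Real.cos (2 * π * p.2 / n) ≠ 1)),
      1 / (1 - Real.cos (2 * π * p.1 / n) * Real.cos (2 * π * p.2 / n))) -
    (∑ p ∈ ((Finset.range n ×ˢ Finset.range n).filter
        (fun p => Real.cos (2 * π * p.1 / n) * Real.cos (2 * π * p.2 / n) ≠ 1)),
      Real.cos (2 * π * (p.1 * 1 + p.2 * 1) / n) /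
        (1 - Real.cos (2 * π * p.1 / n) * Real.cos (2 * π * p.2 / n))) = n ^ 2 - 2 ∧
    (∑ p ∈ ((Finset.range n ×ˢ Finset.range n).filter
        (fun p => Real.cos (2 * π * p.1 / n) * Real.cos (2 * π * p.2 / n) ≠ 1)),
      (1 - Real.cos (2 * π * p.1 / n + 2 * π * p.2 / n)) /
        (1 - Real.cos (2 * π * p.1 / n) * Real.cos (2 * π * p.2 / n))) = n ^ 2 - 2 := by
  have hn0 : 0 < n := by omega
  have hnR : (n : ℝ) ≠ 0 := Nat.cast_ne_zero.mpr hn0.ne'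
  set S := ((Finset.range n ×ˢ Finset.range n).filter
      (fun p : ℕ × ℕ => Real.cos (2 * π * p.1 / n) * Real.cos (2 * π * p.2 / n) ≠ 1)) with hS
  have hsum : ∀ p : ℕ × ℕ, p ∈ S →
      (1 - Real.cos (2 * π * p.1 / n + 2 * π * p.2 / n)) /
        (1 - Real.cos (2 * π * p.1 / n) * Real.cos (2 * π * p.2 / n)) =
      1 + Real.sin (2 * π * p.1 / n) * Real.sin (2 * π * p.2 / n) /
        (1 - Real.cos (2 * π * p.1 / n) * Real.cos (2 * π * p.2 / n)) := by
    intro p hp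
    rw [hS, Finset.mem_filter] at hp
    have hD : 1 - Real.cos (2 * π * p.1 / n) * Real.cos (2 * π * p.2 / n) ≠ 0 := by
      intro h; exact hp.2 (by linarith)
    rw [Real.cos_add]
    field_simp
    ring
  have hcos : ∀ k : ℕ, k < n →
      Real.cos (2 * π * (((n - k) % n : ℕ) : ℝ) / n) = Real.cos (2 * π * k / n) := by
    intro k hk
    rcases Nat.eq_zero_or_pos k with h0 | h0
    · subst h0; simp
    · rw [Nat.mod_eq_of_lt (by omega)]
      have he1 : (2 * π * (((n - k : ℕ)) : ℝ) / n) = 2 * π - 2 * π * k / n := by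
        have : ((n - k : ℕ) : ℝ) = (n : ℝ) - k := by
          push_cast [Nat.cast_sub hk.le]; ring
        rw [this]; field_simp
      rw [he1, Real.cos_two_pi_sub]
  have hsin' : ∀ k : ℕ, k < n →
      Real.sin (2 * π * (((n - k) % n : ℕ) : ℝ) / n) = -Real.sin (2 * π * k / n) := by
    intro k hk
    rcases Nat.eq_zero_or_pos k with h0 | h0
    · subst h0; simp
    · rw [Nat.mod_eq_of_lt (by omega)]
      have he1 : (2 * π * (((n - k : ℕ)) : ℝ) / n) = 2 * π - 2 * π * k / n := by
        have : ((n - k : ℕ) : ℝ) = (n : ℝ) - k := by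
          push_cast [Nat.cast_sub hk.le]; ring
        rw [this]; field_simp
      rw [he1, Real.sin_two_pi_sub]
  have hsin : ∑ p ∈ S, Real.sin (2 * π * p.1 / n) * Real.sin (2 * π * p.2 / n) /
      (1 - Real.cos (2 * π * p.1 / n) * Real.cos (2 * π * p.2 / n)) = 0 := by
    refine Finset.sum_involution (fun p _ => ((n - p.1) % n, p.2)) ?_ ?_ ?_ ?_
    · intro p hp
      rw [hS, Finset.mem_filter, Finset.mem_product, Finset.mem_range, Finset.mem_range] at hp
      have h1 := hcos p.1 hp.1.1
      have h2 := hsin' p.1 hp.1.1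
      simp only [h1, h2]
      ring
    · intro p hp hf hg
      apply hf
      rw [hS, Finset.mem_filter, Finset.mem_product, Finset.mem_range, Finset.mem_range] at hp
      have h2 := hsin' p.1 hp.1.1
      have hpe : ((n - p.1) % n, p.2) = p := hg
      have hfst : (n - p.1) % n = p.1 := congrArg Prod.fst hpe
      rw [hfst] at h2
      have hz : Real.sin (2 * π * p.1 / n) = 0 := by linarith
      rw [hz]
      simp
    · intro p hp
      simp only [hS, Finset.mem_filter, Finset.mem_product, Finset.mem_range] at hp ⊢
      refine ⟨⟨Nat.mod_lt _ hn0, hp.1.2⟩, ?_⟩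
      rw [hcos p.1 hp.1.1]
      exact hp.2
    · intro p hp
      rw [hS, Finset.mem_filter, Finset.mem_product, Finset.mem_range, Finset.mem_range] at hp
      have hk := hp.1.1
      have hfix : (n - (n - p.1) % n) % n = p.1 := by
        rcases Nat.eq_zero_or_pos p.1 with h0 | h0
        · rw [h0]; simp
        · rw [Nat.mod_eq_of_lt (by omega : n - p.1 < n), Nat.sub_sub_self hk.le,
            Nat.mod_eq_of_lt hk]
      exact Prod.ext hfix rfl
  have hcard : (S.card : ℝ) = (n : ℝ) ^ 2 - 2 := by
    have hSeq : S = (Finset.range n ×ˢ Finset.range n) \ {((0 : ℕ), (0 : ℕ)), (n / 2, n / 2)} := by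
      rw [hS]
      ext p
      simp only [Finset.mem_filter, Finset.mem_sdiff, Finset.mem_insert, Finset.mem_singleton,
        Finset.mem_product, Finset.mem_range]
      constructor
      · rintro ⟨⟨h1, h2⟩, h3⟩
        refine ⟨⟨h1, h2⟩, ?_⟩
        rintro (rfl | hq)
        · exact h3 (by simp)
        · apply h3
          rw [prod_cos_eq_one_iff n p.1 p.2 hn0 h1 h2]
          right
          obtain ⟨m, hm⟩ := he
          constructor <;> rw [hq] <;> omega
      · rintro ⟨⟨h1, h2⟩, h3⟩
        refine ⟨⟨h1, h2⟩, ?_⟩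
        intro hc
        rw [prod_cos_eq_one_iff n p.1 p.2 hn0 h1 h2] at hc
        apply h3
        rcases hc with ⟨ha, hb⟩ | ⟨ha, hb⟩
        · left; exact Prod.ext (by simp [ha]) (by simp [hb])
        · right; exact Prod.ext (by simp; omega) (by simp; omega)
    rw [hSeq, Finset.card_sdiff_of_subset]
    · have hmem : ((0 : ℕ), (0 : ℕ)) ∉ ({(n / 2, n / 2)} : Finset (ℕ × ℕ)) := by
        simp only [Finset.mem_singleton, Prod.ext_iff]
        push_neg
        intro h; omega
      rw [Finset.card_product, Finset.card_range, Finset.card_insert_of_notMem hmem,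
        Finset.card_singleton]
      have h2 : 2 ≤ n * n := by nlinarith
      push_cast [Nat.cast_sub h2]
      ring
    · intro p hp
      simp only [Finset.mem_insert, Finset.mem_singleton] at hp
      simp only [Finset.mem_product, Finset.mem_range]
      rcases hp with rfl | rfl
      · exact ⟨hn0, hn0⟩
      · constructor <;> · simp; omega
  have key : (∑ p ∈ S,
      (1 - Real.cos (2 * π * p.1 / n + 2 * π * p.2 / n)) /
        (1 - Real.cos (2 * π * p.1 / n) * Real.cos (2 * π * p.2 / n))) = (n : ℝ) ^ 2 - 2 := by
    rw [Finset.sum_congr rfl hsum, Finset.sum_add_distrib, hsin, Finset.sum_const, add_zero,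
      nsmul_eq_mul, mul_one, hcard]
  constructor
  · rw [← Finset.sum_sub_distrib, ← key]
    apply Finset.sum_congr rfl
    intro p hp
    have harg : 2 * π * ((p.1 : ℝ) * 1 + (p.2 : ℝ) * 1) / n =
        2 * π * p.1 / n + 2 * π * p.2 / n := by
      field_simp
    rw [harg]
    ring
  · exact key
end
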